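/- Let P₁, P₂ > 0 and define, for t in the open interval ((√P₁ - √P₂)², (√P₁ + √P₂)²), the function f(t) = ln((P₁+P₂)/(e·P₂)) + t/(P₁+P₂) + ln(1 - (t + P₁ - P₂)²/(4 P₁ t)). Then f(t) ≤ 0 for all such t, with equality exactly at t = P₁ + P₂. -/

import Mathlib

open Real

/-- The function arising in bounding the density of the sum of two independent uniform
distributions on spheres against a Gaussian density. -/
noncomputable def fMAC (P₁ P₂ t : ℝ) : ℝ :=
  Real.log ((P₁ + P₂) / (Real.exp 1 * P₂)) + t / (P₁ + P₂)
    + Real.log (1 - (t + P₁ - P₂) ^ 2 / (4 * P₁ * t))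

theorem fMAC_nonpos_and_eq_iff (P₁ P₂ t : ℝ) (hP₁ : 0 < P₁) (hP₂ : 0 < P₂)
    (ht : t ∈ Set.Ioo ((Real.sqrt P₁ - Real.sqrt P₂) ^ 2)
      ((Real.sqrt P₁ + Real.sqrt P₂) ^ 2)) :
    fMAC P₁ P₂ t ≤ 0 ∧ (fMAC P₁ P₂ t = 0 ↔ t = P₁ + P₂) := by
  obtain ⟨ht1, ht2⟩ := ht
  have ha : (Real.sqrt P₁) ^ 2 = P₁ := Real.sq_sqrt hP₁.le
  have hb : (Real.sqrt P₂) ^ 2 = P₂ := Real.sq_sqrt hP₂.le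
  have ht0 : 0 < t := lt_of_le_of_lt (sq_nonneg _) ht1
  set s := P₁ + P₂ with hs
  have hs0 : 0 < s := by positivity
  set N := 4 * P₁ * t - (t + P₁ - P₂) ^ 2 with hN
  have hNfac : N = ((Real.sqrt P₁ + Real.sqrt P₂) ^ 2 - t) *
      (t - (Real.sqrt P₁ - Real.sqrt P₂) ^ 2) := by
    rw [hN, hs] at *
    nlinarith [ha, hb]
  have hN0 : 0 < N := by
    rw [hNfac]
    exact mul_pos (by linarith) (by linarith)
  set g := s * N / (4 * P₁ * P₂ * t) with hg
  have hg0 : 0 < g := by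
    rw [hg]; positivity
  have harg : 1 - (t + P₁ - P₂) ^ 2 / (4 * P₁ * t) = N / (4 * P₁ * t) := by
    rw [hN]; field_simp
  have hgprod : g = (s / (Real.exp 1 * P₂)) * (N / (4 * P₁ * t)) * Real.exp 1 := by
    rw [hg]
    field_simp
  have hfeq : fMAC P₁ P₂ t = t / s - 1 + Real.log g := by
    rw [fMAC, harg, hgprod, Real.log_mul (by positivity) (Real.exp_pos 1).ne',
      Real.log_mul (by positivity) (by positivity), Real.log_exp]
    ring
  have hkey : 2 - t / s - g = ((P₁ - P₂) * (t - s)) ^ 2 / (4 * P₁ * P₂ * t * s) := by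
    rw [hg, hN, hs]
    field_simp
    ring
  have hkey' : g ≤ 2 - t / s := by
    have h1 : 0 ≤ ((P₁ - P₂) * (t - s)) ^ 2 / (4 * P₁ * P₂ * t * s) := by positivity
    linarith
  have hlog : Real.log g ≤ g - 1 := Real.log_le_sub_one_of_pos hg0
  constructor
  · rw [hfeq]; linarith
  constructor
  · intro hf
    by_cases hg1 : g = 1
    · rw [hfeq, hg1, Real.log_one] at hf
      have : t / s = 1 := by linarith
      have := (div_eq_one_iff_eq hs0.ne').mp this
      linarith
    · have := Real.log_lt_sub_one_of_pos hg0 hg1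
      rw [hfeq] at hf
      linarith
  · intro hts
    have hN' : N = 4 * P₁ * P₂ := by rw [hN, hts, hs]; ring
    have hg1 : g = 1 := by
      rw [hg, hN', hts, hs]
      field_simp
    rw [hfeq, hg1, Real.log_one, hts, hs, div_self (by positivity)]
    ring
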